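/- Let C₀ > 0 and let f : ℝ² → [0,∞) be measurable with f(p) ≤ C₀ for almost every p. Let ξ ∈ ℝ² with |ξ| < 1. Then there is a constant C, depending only on C₀, such that ∫_{ℝ²} f(p)/(p_0 (1 + p̂·ξ)) dp ≤ C (1 − |ξ|²)^{−2/5} (∫_{ℝ²} p_0² f(p) dp)^{2/5}. -/

import Mathlib

open MeasureTheory Real
open scoped NNReal RealInnerProductSpace ENNReal

/-- `p₀ = √(1 + |p|²)` for `p ∈ ℝ²`. -/
noncomputable def pZero (p : EuclideanSpace ℝ (Fin 2)) : ℝ := Real.sqrt (1 + ‖p‖ ^ 2)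

/-- `p̂ = p / p₀` for `p ∈ ℝ²`. -/
noncomputable def pHat (p : EuclideanSpace ℝ (Fin 2)) : EuclideanSpace ℝ (Fin 2) :=
  (pZero p)⁻¹ • p

lemma inv_add_mul_sq_eq {a b : ℝ} (ha : 0 < a) (hb : 0 < b) :
    (fun x : ℝ => (a + b * x ^ 2)⁻¹)
      = fun x : ℝ => a⁻¹ * (1 + (x * Real.sqrt (b / a)) ^ 2)⁻¹ := by
  funext x
  rw [mul_pow, Real.sq_sqrt (by positivity), ← mul_inv]
  congr 1
  field_simp

lemma integrable_inv_add_mul_sq {a b : ℝ} (ha : 0 < a) (hb : 0 < b) :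
    Integrable (fun x : ℝ => (a + b * x ^ 2)⁻¹) := by
  rw [inv_add_mul_sq_eq ha hb]
  exact (integrable_inv_one_add_sq.comp_mul_right' (by positivity)).const_mul _

lemma integral_inv_add_mul_sq {a b : ℝ} (ha : 0 < a) (hb : 0 < b) :
    ∫ x : ℝ, (a + b * x ^ 2)⁻¹ = π / Real.sqrt (a * b) := by
  have hk : (0:ℝ) < Real.sqrt (b / a) := by positivity
  rw [inv_add_mul_sq_eq ha hb, MeasureTheory.integral_const_mul,
    MeasureTheory.Measure.integral_comp_mul_right (fun y => (1 + y ^ 2)⁻¹) (Real.sqrt (b/a)),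
    integral_univ_inv_one_add_sq, abs_of_pos (inv_pos.2 hk), smul_eq_mul,
    Real.sqrt_mul ha.le, Real.sqrt_div hb.le]
  have h2 : (0:ℝ) < Real.sqrt a := Real.sqrt_pos.2 ha
  have h3 : (0:ℝ) < Real.sqrt b := Real.sqrt_pos.2 hb
  field_simp
  linear_combination (Real.mul_self_sqrt ha.le)

lemma lintegral_inv_add_mul_sq {a b : ℝ} (ha : 0 < a) (hb : 0 < b) :
    ∫⁻ x : ℝ, ENNReal.ofReal (a + b * x ^ 2)⁻¹ = ENNReal.ofReal (π / Real.sqrt (a * b)) := by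
  rw [← integral_inv_add_mul_sq ha hb,
    ← ofReal_integral_eq_lintegral_ofReal (integrable_inv_add_mul_sq ha hb)]
  exact Filter.Eventually.of_forall fun x => by positivity


lemma pointwise_split {s t x y : ℝ} (hs0 : 0 ≤ s) (hs1 : s < 1) (ht : t = 1 - s^2) :
    (Real.sqrt (1 + (x^2 + y^2)) + s*x)⁻¹
      ≤ 2 * Real.sqrt (1+x^2) * ((1 + t*x^2) + y^2)⁻¹
        + 2 * Real.sqrt (1+y^2) * ((1+y^2) + t*x^2)⁻¹ := by
  set P := Real.sqrt (1 + (x^2 + y^2)) with hPdef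
  have hP2 : P^2 = 1 + (x^2 + y^2) := Real.sq_sqrt (by positivity)
  have hP : 0 < P := Real.sqrt_pos.2 (by positivity)
  have ht0 : 0 < t := by nlinarith
  have hxP : |x| ≤ P := by
    rw [← Real.sqrt_sq_eq_abs]
    exact Real.sqrt_le_sqrt (by nlinarith)
  have hsxP : s * |x| < P := lt_of_le_of_lt (mul_le_mul_of_nonneg_left hxP hs0) (by nlinarith)
  have hD : 0 < P + s*x := by nlinarith [neg_abs_le x, abs_nonneg x]
  have hD2 : 0 < P - s*x := by nlinarith [le_abs_self x, abs_nonneg x]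
  have hA : (0:ℝ) < 1 + t*x^2 + y^2 := by
    nlinarith [sq_nonneg x, sq_nonneg y, mul_nonneg ht0.le (sq_nonneg x)]
  have key : (P + s*x) * (P - s*x) = 1 + t*x^2 + y^2 := by
    have h2 : P^2 - (s*x)^2 = 1 + t*x^2 + y^2 := by rw [hP2, ht]; ring
    nlinarith [h2]
  have hinv : (P + s*x)⁻¹ = (P - s*x) / (1 + t*x^2 + y^2) := by
    rw [← key]
    field_simp
  have hPsum : P ≤ Real.sqrt (1+x^2) + Real.sqrt (1+y^2) := by
    have h1 : (0:ℝ) ≤ Real.sqrt (1+x^2) := Real.sqrt_nonneg _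
    have h2 : (0:ℝ) ≤ Real.sqrt (1+y^2) := Real.sqrt_nonneg _
    have e1 : Real.sqrt (1+x^2)^2 = 1+x^2 := Real.sq_sqrt (by positivity)
    have e2 : Real.sqrt (1+y^2)^2 = 1+y^2 := Real.sq_sqrt (by positivity)
    nlinarith [hP2, hP]
  calc (P + s*x)⁻¹ = (P - s*x) / (1 + t*x^2 + y^2) := hinv
    _ ≤ (2*Real.sqrt (1+x^2) + 2*Real.sqrt (1+y^2)) / (1 + t*x^2 + y^2) := by
        gcongr
        nlinarith [neg_abs_le x, abs_nonneg x]
    _ = 2 * Real.sqrt (1+x^2) * ((1 + t*x^2) + y^2)⁻¹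
        + 2 * Real.sqrt (1+y^2) * ((1+y^2) + t*x^2)⁻¹ := by
        rw [add_div]
        ring_nf

lemma inner_y_integral {c a : ℝ} (hc : 0 ≤ c) (ha : 0 < a) :
    ∫⁻ y : ℝ, ENNReal.ofReal (c * (a + y^2)⁻¹)
      = ENNReal.ofReal c * ENNReal.ofReal (π / Real.sqrt a) := by
  simp_rw [ENNReal.ofReal_mul hc]
  rw [lintegral_const_mul' _ _ ENNReal.ofReal_ne_top]
  congr 1
  have := lintegral_inv_add_mul_sq ha one_pos
  simpa [mul_one] using this

lemma inner_x_integral {c a t : ℝ} (hc : 0 ≤ c) (ha : 0 < a) (ht : 0 < t) :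
    ∫⁻ x : ℝ, ENNReal.ofReal (c * (a + t*x^2)⁻¹)
      = ENNReal.ofReal c * ENNReal.ofReal (π / Real.sqrt (a*t)) := by
  simp_rw [ENNReal.ofReal_mul hc]
  rw [lintegral_const_mul' _ _ ENNReal.ofReal_ne_top]
  congr 1
  exact lintegral_inv_add_mul_sq ha ht

lemma ballRR {s R : ℝ} (hs0 : 0 ≤ s) (hs1 : s < 1) (hR : 0 < R) :
    ∫⁻ z : ℝ × ℝ in {z | z.1^2 + z.2^2 ≤ R^2},
      ENNReal.ofReal (Real.sqrt (1 + (z.1^2 + z.2^2)) + s * z.1)⁻¹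
      ≤ ENNReal.ofReal (8 * π * R / Real.sqrt (1 - s^2)) := by
  set t : ℝ := 1 - s^2 with ht
  have ht0 : 0 < t := by nlinarith
  have ht1 : t ≤ 1 := by nlinarith
  have hst : 0 < Real.sqrt t := Real.sqrt_pos.2 ht0
  set G₁ : ℝ × ℝ → ℝ≥0∞ :=
    fun z => ENNReal.ofReal (2 * Real.sqrt (1+z.1^2) * ((1 + t*z.1^2) + z.2^2)⁻¹) with hG₁
  set G₂ : ℝ × ℝ → ℝ≥0∞ :=
    fun z => ENNReal.ofReal (2 * Real.sqrt (1+z.2^2) * ((1+z.2^2) + t*z.1^2)⁻¹) with hG₂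
  have hG₁m : Measurable G₁ := by
    apply ENNReal.measurable_ofReal.comp
    fun_prop
  have hG₂m : Measurable G₂ := by
    apply ENNReal.measurable_ofReal.comp
    fun_prop
  have hpt : ∀ z : ℝ × ℝ,
      ENNReal.ofReal (Real.sqrt (1 + (z.1^2 + z.2^2)) + s * z.1)⁻¹ ≤ G₁ z + G₂ z := by
    intro z
    rw [hG₁, hG₂, ← ENNReal.ofReal_add (by positivity) (by positivity)]
    exact ENNReal.ofReal_le_ofReal (pointwise_split hs0 hs1 ht)
  have habs : ∀ u v : ℝ, u^2 + v^2 ≤ R^2 → |u| ≤ R := by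
    intro u v h
    rw [← Real.sqrt_sq_eq_abs, ← Real.sqrt_sq hR.le]
    exact Real.sqrt_le_sqrt (by nlinarith [sq_nonneg v])
  have hsub1 : {z : ℝ × ℝ | z.1^2 + z.2^2 ≤ R^2} ⊆ (Set.Icc (-R) R) ×ˢ (Set.univ : Set ℝ) := by
    intro z hz
    refine ⟨abs_le.1 (habs _ _ hz), trivial⟩
  have hsub2 : {z : ℝ × ℝ | z.1^2 + z.2^2 ≤ R^2} ⊆ (Set.univ : Set ℝ) ×ˢ (Set.Icc (-R) R) := by
    intro z hz
    simp only [Set.mem_setOf_eq] at hz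
    exact ⟨trivial, abs_le.1 (habs z.2 z.1 (by linarith))⟩
  have hIcc : (volume (Set.Icc (-R) R)) = ENNReal.ofReal (2*R) := by
    rw [Real.volume_Icc]; congr 1; ring
  -- bound for term 1
  have hterm1 : ∫⁻ z in (Set.Icc (-R) R) ×ˢ (Set.univ : Set ℝ), G₁ z
      ≤ ENNReal.ofReal (2*π/Real.sqrt t) * ENNReal.ofReal (2*R) := by
    rw [Measure.volume_eq_prod, ← Measure.prod_restrict, Measure.restrict_univ]
    rw [lintegral_prod _ (hG₁m.aemeasurable)]
    calc ∫⁻ x in Set.Icc (-R) R, ∫⁻ y, G₁ (x, y)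
        ≤ ∫⁻ _ in Set.Icc (-R) R, ENNReal.ofReal (2*π/Real.sqrt t) := by
          apply lintegral_mono_ae
          apply Filter.Eventually.of_forall
          intro x
          rw [hG₁]
          simp only
          rw [inner_y_integral (by positivity) (by nlinarith [sq_nonneg x, mul_nonneg ht0.le (sq_nonneg x)])]
          rw [← ENNReal.ofReal_mul (by positivity)]
          apply ENNReal.ofReal_le_ofReal
          have hA : (0:ℝ) < Real.sqrt (1 + t*x^2) := Real.sqrt_pos.2 (by nlinarith [mul_nonneg ht0.le (sq_nonneg x)])
          have hkey : Real.sqrt t * Real.sqrt (1+x^2) ≤ Real.sqrt (1 + t*x^2) := by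
            rw [← Real.sqrt_mul ht0.le]
            exact Real.sqrt_le_sqrt (by nlinarith)
          rw [show 2*Real.sqrt (1+x^2)*(π/Real.sqrt (1+t*x^2))
                = (2*Real.sqrt (1+x^2)*π)/Real.sqrt (1+t*x^2) by ring,
              div_le_div_iff₀ hA hst]
          nlinarith [Real.pi_pos, Real.sqrt_nonneg (1+x^2), hkey]
      _ = ENNReal.ofReal (2*π/Real.sqrt t) * ENNReal.ofReal (2*R) := by
          rw [setLIntegral_const, hIcc]
  -- bound for term 2
  have hterm2 : ∫⁻ z in (Set.univ : Set ℝ) ×ˢ (Set.Icc (-R) R), G₂ z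
      ≤ ENNReal.ofReal (2*π/Real.sqrt t) * ENNReal.ofReal (2*R) := by
    rw [Measure.volume_eq_prod, ← Measure.prod_restrict, Measure.restrict_univ]
    rw [lintegral_prod_symm _ (hG₂m.aemeasurable)]
    calc ∫⁻ y in Set.Icc (-R) R, ∫⁻ x, G₂ (x, y)
        ≤ ∫⁻ _ in Set.Icc (-R) R, ENNReal.ofReal (2*π/Real.sqrt t) := by
          apply lintegral_mono_ae
          apply Filter.Eventually.of_forall
          intro y
          rw [hG₂]
          simp only
          rw [inner_x_integral (by positivity) (by positivity) ht0]
          rw [← ENNReal.ofReal_mul (by positivity)]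
          apply ENNReal.ofReal_le_ofReal
          have ha : (0:ℝ) < Real.sqrt (1+y^2) := Real.sqrt_pos.2 (by positivity)
          rw [Real.sqrt_mul (by positivity)]
          apply le_of_eq
          rw [show 2*Real.sqrt (1+y^2)*(π/(Real.sqrt (1+y^2)*Real.sqrt t))
                = (2*π)*(Real.sqrt (1+y^2)/Real.sqrt (1+y^2))/Real.sqrt t by ring,
              div_self ha.ne']
          ring
      _ = ENNReal.ofReal (2*π/Real.sqrt t) * ENNReal.ofReal (2*R) := by
          rw [setLIntegral_const, hIcc]
  calc ∫⁻ z in {z : ℝ × ℝ | z.1^2 + z.2^2 ≤ R^2},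
        ENNReal.ofReal (Real.sqrt (1 + (z.1^2 + z.2^2)) + s * z.1)⁻¹
      ≤ ∫⁻ z in {z : ℝ × ℝ | z.1^2 + z.2^2 ≤ R^2}, (G₁ z + G₂ z) := lintegral_mono hpt
    _ = (∫⁻ z in {z : ℝ × ℝ | z.1^2 + z.2^2 ≤ R^2}, G₁ z)
        + ∫⁻ z in {z : ℝ × ℝ | z.1^2 + z.2^2 ≤ R^2}, G₂ z := lintegral_add_left (hG₁m) _
    _ ≤ (∫⁻ z in (Set.Icc (-R) R) ×ˢ (Set.univ : Set ℝ), G₁ z)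
        + ∫⁻ z in (Set.univ : Set ℝ) ×ˢ (Set.Icc (-R) R), G₂ z := by
        gcongr
    _ ≤ ENNReal.ofReal (2*π/Real.sqrt t) * ENNReal.ofReal (2*R)
        + ENNReal.ofReal (2*π/Real.sqrt t) * ENNReal.ofReal (2*R) := by gcongr
    _ ≤ ENNReal.ofReal (8 * π * R / Real.sqrt (1 - s^2)) := by
        rw [← ENNReal.ofReal_mul (by positivity), ← two_mul, ← ht,
          show (2:ℝ≥0∞) = ENNReal.ofReal 2 by simp, ← ENNReal.ofReal_mul (by norm_num)]
        apply ENNReal.ofReal_le_ofReal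
        apply le_of_eq
        field_simp
        ring

lemma exists_unit (ξ : EuclideanSpace ℝ (Fin 2)) :
    ∃ u : EuclideanSpace ℝ (Fin 2), ‖u‖ = 1 ∧ ξ = ‖ξ‖ • u := by
  by_cases h : ξ = 0
  · refine ⟨EuclideanSpace.single 0 1, by simp [EuclideanSpace.norm_single], by simp [h]⟩
  · refine ⟨‖ξ‖⁻¹ • ξ, ?_, ?_⟩
    · rw [norm_smul, norm_inv, norm_norm, inv_mul_cancel₀ (norm_ne_zero_iff.2 h)]
    · rw [smul_inv_smul₀ (norm_ne_zero_iff.2 h)]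

lemma exists_basis (ξ : EuclideanSpace ℝ (Fin 2)) :
    ∃ b : OrthonormalBasis (Fin 2) ℝ (EuclideanSpace ℝ (Fin 2)),
      ξ = ‖ξ‖ • b 0 := by
  obtain ⟨u, hu1, huξ⟩ := exists_unit ξ
  have hcard : Module.finrank ℝ (EuclideanSpace ℝ (Fin 2)) = Fintype.card (Fin 2) := by
    simp [finrank_euclideanSpace_fin]
  have horth : Orthonormal ℝ (({0} : Set (Fin 2)).restrict ![u, 0]) := by
    rw [orthonormal_iff_ite]
    rintro ⟨i, hi⟩ ⟨j, hj⟩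
    simp only [Set.mem_singleton_iff] at hi hj
    subst hi; subst hj
    simp only [Set.restrict_apply, Matrix.cons_val_zero, if_pos rfl]
    rw [show ((1:ℝ) : ℝ) = 1 from rfl]
    have hr : ({0} : Set (Fin 2)).restrict ![u, 0] ⟨0, hi⟩ = u := rfl
    rw [real_inner_self_eq_norm_sq, hr, hu1]
    norm_num
  obtain ⟨b, hb⟩ := horth.exists_orthonormalBasis_extension_of_card_eq hcard
  refine ⟨b, ?_⟩
  rw [hb 0 rfl]
  simpa using huξ

lemma ball_est (ξ : EuclideanSpace ℝ (Fin 2)) (hξ : ‖ξ‖ < 1) {R : ℝ} (hR : 0 < R) :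
    ∫⁻ p in {p : EuclideanSpace ℝ (Fin 2) | ‖p‖ ≤ R},
        ENNReal.ofReal (pZero p + ⟪p, ξ⟫)⁻¹
      ≤ ENNReal.ofReal (8 * π * R / Real.sqrt (1 - ‖ξ‖^2)) := by
  obtain ⟨b, hbξ⟩ := exists_basis ξ
  set T : EuclideanSpace ℝ (Fin 2) ≃ᵐ ℝ × ℝ :=
    (b.measurableEquiv.trans (MeasurableEquiv.toLp 2 (Fin 2 → ℝ)).symm).trans
      (MeasurableEquiv.finTwoArrow) with hT
  have hTval : ∀ p, T p = (b.repr p 0, b.repr p 1) := fun p => rfl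
  have hTmp : MeasurePreserving T volume volume := by
    exact ((volume_preserving_finTwoArrow ℝ).comp
      ((EuclideanSpace.volume_preserving_symm_measurableEquiv_toLp (Fin 2)).comp
        b.measurePreserving_measurableEquiv))
  have hnorm : ∀ p : EuclideanSpace ℝ (Fin 2), (b.repr p 0)^2 + (b.repr p 1)^2 = ‖p‖^2 := by
    intro p
    have h1 : ‖b.repr p‖ = ‖p‖ := b.repr.norm_map p
    rw [← h1, EuclideanSpace.norm_eq]
    rw [Real.sq_sqrt (by positivity)]
    simp [Fin.sum_univ_two, sq_abs]
  have hinner : ∀ p : EuclideanSpace ℝ (Fin 2), ⟪p, ξ⟫ = ‖ξ‖ * (b.repr p 0) := by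
    intro p
    conv_lhs => rw [hbξ]
    rw [real_inner_smul_right, b.repr_apply_apply, real_inner_comm]
  have hpre : T ⁻¹' {z : ℝ × ℝ | z.1^2 + z.2^2 ≤ R^2} = {p | ‖p‖ ≤ R} := by
    ext p
    simp only [Set.mem_preimage, Set.mem_setOf_eq, hTval, hnorm p]
    constructor
    · intro h
      nlinarith [norm_nonneg p]
    · intro h
      nlinarith [norm_nonneg p]
  have := hTmp.setLIntegral_comp_preimage_emb T.measurableEmbedding
    (fun z => ENNReal.ofReal (Real.sqrt (1 + (z.1^2 + z.2^2)) + ‖ξ‖ * z.1)⁻¹)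
    {z : ℝ × ℝ | z.1^2 + z.2^2 ≤ R^2}
  rw [hpre] at this
  have heq : ∀ p : EuclideanSpace ℝ (Fin 2),
      ENNReal.ofReal (pZero p + ⟪p, ξ⟫)⁻¹
        = ENNReal.ofReal (Real.sqrt (1 + ((T p).1^2 + (T p).2^2)) + ‖ξ‖ * (T p).1)⁻¹ := by
    intro p
    rw [hTval]
    simp only
    rw [hnorm p, hinner p]
    rfl
  calc ∫⁻ p in {p : EuclideanSpace ℝ (Fin 2) | ‖p‖ ≤ R}, ENNReal.ofReal (pZero p + ⟪p, ξ⟫)⁻¹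
      = ∫⁻ z in {z : ℝ × ℝ | z.1^2 + z.2^2 ≤ R^2},
          ENNReal.ofReal (Real.sqrt (1 + (z.1^2 + z.2^2)) + ‖ξ‖ * z.1)⁻¹ := by
        rw [← this]
        exact setLIntegral_congr_fun (isClosed_le continuous_norm continuous_const).measurableSet
          (fun p _ => heq p)
    _ ≤ ENNReal.ofReal (8 * π * R / Real.sqrt (1 - ‖ξ‖^2)) :=
        ballRR (norm_nonneg ξ) hξ hR

lemma D_facts (ξ : EuclideanSpace ℝ (Fin 2)) (hξ : ‖ξ‖ < 1) (p : EuclideanSpace ℝ (Fin 2)) :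
    0 < pZero p ∧ ‖p‖ < pZero p ∧ 0 < pZero p + ⟪p, ξ⟫ ∧
      1 + (1-‖ξ‖^2)*‖p‖^2 ≤ (pZero p + ⟪p, ξ⟫) * (2 * pZero p) := by
  have hsq : pZero p ^ 2 = 1 + ‖p‖^2 := Real.sq_sqrt (by positivity)
  have hpos : 0 < pZero p := Real.sqrt_pos.2 (by positivity)
  have hip : |⟪p, ξ⟫| ≤ ‖p‖ * ‖ξ‖ := abs_real_inner_le_norm p ξ
  have hip2 : ⟪p, ξ⟫^2 ≤ ‖p‖^2 * ‖ξ‖^2 := by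
    nlinarith [sq_abs ⟪p, ξ⟫, abs_nonneg ⟪p, ξ⟫, norm_nonneg p, norm_nonneg ξ]
  have hplt : ‖p‖ < pZero p := by nlinarith [norm_nonneg p]
  have hD : 0 < pZero p + ⟪p, ξ⟫ := by
    nlinarith [neg_abs_le ⟪p, ξ⟫, norm_nonneg p, norm_nonneg ξ, abs_nonneg ⟪p, ξ⟫]
  refine ⟨hpos, hplt, hD, ?_⟩
  nlinarith [sq_nonneg (pZero p + ⟪p, ξ⟫), hip2, norm_nonneg ξ, norm_nonneg p]

lemma crude_pointwise (ξ : EuclideanSpace ℝ (Fin 2)) (hξ : ‖ξ‖ < 1)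
    (f : EuclideanSpace ℝ (Fin 2) → ℝ) (hf0 : ∀ p, 0 ≤ f p) (p : EuclideanSpace ℝ (Fin 2)) :
    f p / (pZero p + ⟪p, ξ⟫) ≤ 2 * (pZero p^2 * f p) := by
  obtain ⟨hpos, hplt, hD, hDlow⟩ := D_facts ξ hξ p
  have hsq : pZero p ^ 2 = 1 + ‖p‖^2 := Real.sq_sqrt (by positivity)
  have ht0 : 0 ≤ (1-‖ξ‖^2) * ‖p‖^2 :=
    mul_nonneg (by nlinarith [norm_nonneg ξ]) (sq_nonneg ‖p‖)
  have hinv : (pZero p + ⟪p, ξ⟫)⁻¹ ≤ 2 * pZero p := by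
    rw [inv_le_iff_one_le_mul₀ hD]
    nlinarith
  have h1 : 1 ≤ pZero p := by nlinarith [sq_nonneg ‖p‖]
  calc f p / (pZero p + ⟪p, ξ⟫) = f p * (pZero p + ⟪p, ξ⟫)⁻¹ := div_eq_mul_inv _ _
    _ ≤ f p * (2 * pZero p) := by
        exact mul_le_mul_of_nonneg_left hinv (hf0 p)
    _ ≤ 2 * (pZero p^2 * f p) := by nlinarith [hf0 p, sq_nonneg (pZero p - 1)]

lemma tail_pointwise (ξ : EuclideanSpace ℝ (Fin 2)) (hξ : ‖ξ‖ < 1)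
    (f : EuclideanSpace ℝ (Fin 2) → ℝ) (hf0 : ∀ p, 0 ≤ f p) {R : ℝ} (hR : 0 < R)
    (p : EuclideanSpace ℝ (Fin 2)) (hp : R ≤ ‖p‖) :
    f p / (pZero p + ⟪p, ξ⟫)
      ≤ 2 / (R * (1 + (1-‖ξ‖^2)*R^2)) * (pZero p^2 * f p) := by
  obtain ⟨hpos, hplt, hD, hDlow⟩ := D_facts ξ hξ p
  set t := 1 - ‖ξ‖^2 with htdef
  have ht0 : 0 < t := by nlinarith [norm_nonneg ξ]
  have hQR : 0 < R * (1 + t*R^2) := by positivity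
  have hQp : (0:ℝ) < 1 + t*‖p‖^2 := by nlinarith [norm_nonneg p, sq_nonneg ‖p‖, mul_nonneg ht0.le (sq_nonneg ‖p‖)]
  -- key : R*(1+t*R^2) ≤ pZero p ^2 * ... we show D⁻¹ ≤ 2*pZero^2/(R*(1+tR²))
  have hinv : (pZero p + ⟪p, ξ⟫)⁻¹ ≤ 2 * pZero p^2 / (R * (1 + t*R^2)) := by
    rw [inv_le_iff_one_le_mul₀ hD, div_mul_eq_mul_div, le_div_iff₀ hQR]
    -- 1 * (R*(1+tR²)) ≤ 2p₀²·D
    have hRp : R ≤ pZero p := hp.trans hplt.le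
    have h1 : R * (1 + t*R^2) ≤ pZero p * (1 + t*‖p‖^2) := by
      have e1 : (1:ℝ) + t*R^2 ≤ 1 + t*‖p‖^2 := by
        have := mul_le_mul_of_nonneg_left (mul_self_le_mul_self hR.le hp) ht0.le
        nlinarith
      nlinarith [hQp, hpos]
    have h2 : pZero p * (1 + t*‖p‖^2) ≤ pZero p * ((pZero p + ⟪p, ξ⟫) * (2 * pZero p)) :=
      mul_le_mul_of_nonneg_left hDlow hpos.le
    nlinarith [h1, h2]
  calc f p / (pZero p + ⟪p, ξ⟫) = f p * (pZero p + ⟪p, ξ⟫)⁻¹ := div_eq_mul_inv _ _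
    _ ≤ f p * (2 * pZero p^2 / (R * (1 + t*R^2))) := mul_le_mul_of_nonneg_left hinv (hf0 p)
    _ = 2 / (R * (1 + t*R^2)) * (pZero p^2 * f p) := by ring

lemma crude_bound (ξ : EuclideanSpace ℝ (Fin 2)) (hξ : ‖ξ‖ < 1)
    (f : EuclideanSpace ℝ (Fin 2) → ℝ) (hf0 : ∀ p, 0 ≤ f p) :
    ∫⁻ p, ENNReal.ofReal (f p / (pZero p + ⟪p, ξ⟫))
      ≤ 2 * ∫⁻ p, ENNReal.ofReal (pZero p^2 * f p) := by
  calc ∫⁻ p, ENNReal.ofReal (f p / (pZero p + ⟪p, ξ⟫))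
      ≤ ∫⁻ p, ENNReal.ofReal (2 * (pZero p^2 * f p)) :=
        lintegral_mono fun p => ENNReal.ofReal_le_ofReal (crude_pointwise ξ hξ f hf0 p)
    _ = 2 * ∫⁻ p, ENNReal.ofReal (pZero p^2 * f p) := by
        simp_rw [ENNReal.ofReal_mul (by norm_num : (0:ℝ) ≤ 2)]
        rw [lintegral_const_mul' _ _ ENNReal.ofReal_ne_top]
        norm_num

lemma master_bound (C₀ : ℝ) (hC₀ : 0 < C₀) (f : EuclideanSpace ℝ (Fin 2) → ℝ)
    (hf0 : ∀ p, 0 ≤ f p) (hfC : ∀ᵐ p : EuclideanSpace ℝ (Fin 2), f p ≤ C₀)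
    (ξ : EuclideanSpace ℝ (Fin 2)) (hξ : ‖ξ‖ < 1) {R : ℝ} (hR : 0 < R) :
    ∫⁻ p, ENNReal.ofReal (f p / (pZero p + ⟪p, ξ⟫))
      ≤ ENNReal.ofReal (C₀ * (8 * π * R / Real.sqrt (1 - ‖ξ‖^2)))
        + ENNReal.ofReal (2 / (R * (1 + (1-‖ξ‖^2)*R^2)))
            * ∫⁻ p, ENNReal.ofReal (pZero p^2 * f p) := by
  have ht0 : 0 < 1 - ‖ξ‖^2 := by nlinarith [norm_nonneg ξ]
  have hcpos : 0 < R * (1 + (1-‖ξ‖^2)*R^2) :=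
    mul_pos hR (by nlinarith [mul_nonneg ht0.le (sq_nonneg R)])
  set B : Set (EuclideanSpace ℝ (Fin 2)) := {p | ‖p‖ ≤ R} with hB
  have hBm : MeasurableSet B := (isClosed_le continuous_norm continuous_const).measurableSet
  rw [← lintegral_add_compl (fun p => ENNReal.ofReal (f p / (pZero p + ⟪p, ξ⟫))) hBm]
  apply add_le_add
  · calc ∫⁻ p in B, ENNReal.ofReal (f p / (pZero p + ⟪p, ξ⟫))
        ≤ ∫⁻ p in B, ENNReal.ofReal C₀ * ENNReal.ofReal (pZero p + ⟪p, ξ⟫)⁻¹ := by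
          apply lintegral_mono_ae
          filter_upwards [ae_restrict_of_ae hfC] with p hp
          rw [← ENNReal.ofReal_mul hC₀.le]
          apply ENNReal.ofReal_le_ofReal
          obtain ⟨-, -, hD, -⟩ := D_facts ξ hξ p
          rw [div_eq_mul_inv]
          exact mul_le_mul_of_nonneg_right hp (inv_nonneg.2 hD.le)
      _ = ENNReal.ofReal C₀ * ∫⁻ p in B, ENNReal.ofReal (pZero p + ⟪p, ξ⟫)⁻¹ :=
          lintegral_const_mul' _ _ ENNReal.ofReal_ne_top
      _ ≤ ENNReal.ofReal C₀ * ENNReal.ofReal (8 * π * R / Real.sqrt (1 - ‖ξ‖^2)) := by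
          gcongr
          exact ball_est ξ hξ hR
      _ = ENNReal.ofReal (C₀ * (8 * π * R / Real.sqrt (1 - ‖ξ‖^2))) :=
          (ENNReal.ofReal_mul hC₀.le).symm
  · calc ∫⁻ p in Bᶜ, ENNReal.ofReal (f p / (pZero p + ⟪p, ξ⟫))
        ≤ ∫⁻ p in Bᶜ, ENNReal.ofReal (2 / (R * (1 + (1-‖ξ‖^2)*R^2)))
            * ENNReal.ofReal (pZero p^2 * f p) := by
          apply lintegral_mono_ae
          filter_upwards [ae_restrict_mem hBm.compl] with p hp
          simp only [hB, Set.mem_compl_iff, Set.mem_setOf_eq] at hp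
          have hp' : R ≤ ‖p‖ := (not_le.1 hp).le
          rw [← ENNReal.ofReal_mul (div_nonneg (by norm_num) hcpos.le)]
          exact ENNReal.ofReal_le_ofReal (tail_pointwise ξ hξ f hf0 hR p hp')
      _ = ENNReal.ofReal (2 / (R * (1 + (1-‖ξ‖^2)*R^2)))
            * ∫⁻ p in Bᶜ, ENNReal.ofReal (pZero p^2 * f p) :=
          lintegral_const_mul' _ _ ENNReal.ofReal_ne_top
      _ ≤ ENNReal.ofReal (2 / (R * (1 + (1-‖ξ‖^2)*R^2)))
            * ∫⁻ p, ENNReal.ofReal (pZero p^2 * f p) := by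
          gcongr
          exact Measure.restrict_le_self

set_option maxHeartbeats 1000000 in
/-- **Momentum-singularity estimate, first form** (Lemma 5.2, estimate (5.1)).
For `f : ℝ² → [0,∞)` measurable with `f ≤ C₀` a.e. and `|ξ| < 1`, there is a constant
`C = C(C₀)` with
`∫ f(p)/(p₀(1+p̂·ξ)) dp ≤ C (1−|ξ|²)^{−2/5} (∫ p₀² f dp)^{2/5}`. -/
theorem singularity_estimate_one (C₀ : ℝ) (hC₀ : 0 < C₀) :
    ∃ C : ℝ≥0, 0 < C ∧
      ∀ (f : EuclideanSpace ℝ (Fin 2) → ℝ),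
        Measurable f → (∀ p, 0 ≤ f p) →
        (∀ᵐ p : EuclideanSpace ℝ (Fin 2), f p ≤ C₀) →
        ∀ (ξ : EuclideanSpace ℝ (Fin 2)), ‖ξ‖ < 1 →
          (∫⁻ p, ENNReal.ofReal (f p / (pZero p * (1 + ⟪pHat p, ξ⟫))))
            ≤ C * ENNReal.ofReal (1 - ‖ξ‖ ^ 2) ^ (-(2 / 5) : ℝ)
              * (∫⁻ p, ENNReal.ofReal (pZero p ^ 2 * f p)) ^ ((2 : ℝ) / 5) := by
  refine ⟨(8*π*C₀+2).toNNReal, Real.toNNReal_pos.2 (by positivity), ?_⟩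
  intro f hf hf0 hfC ξ hξ
  have hden : ∀ p : EuclideanSpace ℝ (Fin 2),
      pZero p * (1 + ⟪pHat p, ξ⟫) = pZero p + ⟪p, ξ⟫ := by
    intro p
    have hpos : 0 < pZero p := Real.sqrt_pos.2 (by positivity)
    rw [pHat, real_inner_smul_left, mul_add, mul_one, mul_inv_cancel_left₀ hpos.ne']
  have hJeq : (∫⁻ p, ENNReal.ofReal (f p / (pZero p * (1 + ⟪pHat p, ξ⟫))))
      = ∫⁻ p, ENNReal.ofReal (f p / (pZero p + ⟪p, ξ⟫)) :=
    lintegral_congr fun p => by rw [hden p]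
  rw [hJeq]
  have hCcoe : (((8*π*C₀+2).toNNReal : ℝ≥0) : ℝ≥0∞) = ENNReal.ofReal (8*π*C₀+2) := rfl
  rw [hCcoe]
  set I := ∫⁻ p, ENNReal.ofReal (pZero p ^ 2 * f p) with hIdef
  have ht0 : 0 < 1 - ‖ξ‖^2 := by nlinarith [norm_nonneg ξ]
  set t := 1 - ‖ξ‖^2 with htdef
  have htof : ENNReal.ofReal (1 - ‖ξ‖ ^ 2) = ENNReal.ofReal t := rfl
  rcases eq_top_or_lt_top I with hItop | hIlt
  · rw [hItop, ENNReal.top_rpow_of_pos (by norm_num), ENNReal.mul_top]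
    · exact le_top
    · exact mul_ne_zero (by simp [ENNReal.ofReal_eq_zero]; positivity)
        (ENNReal.rpow_pos (ENNReal.ofReal_pos.2 ht0) ENNReal.ofReal_ne_top).ne'
  by_cases hI0 : I = 0
  · have h2 : (∫⁻ p, ENNReal.ofReal (f p / (pZero p + ⟪p, ξ⟫))) ≤ 2 * I :=
      crude_bound ξ hξ f hf0
    rw [hI0, mul_zero] at h2
    exact h2.trans zero_le
  set Ir := I.toReal with hIr
  have hIrpos : 0 < Ir := ENNReal.toReal_pos hI0 hIlt.ne
  have hIeq : I = ENNReal.ofReal Ir := (ENNReal.ofReal_toReal hIlt.ne).symm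
  set a := Ir ^ ((1:ℝ)/10) with ha
  set b := t ^ ((1:ℝ)/10) with hb
  have hapos : 0 < a := Real.rpow_pos_of_pos hIrpos _
  have hbpos : 0 < b := Real.rpow_pos_of_pos ht0 _
  have hIa : Ir = a^(10:ℕ) := by
    rw [ha, ← Real.rpow_natCast (Ir ^ ((1:ℝ)/10)) 10, ← Real.rpow_mul hIrpos.le]
    norm_num
  have hta : t = b^(10:ℕ) := by
    rw [hb, ← Real.rpow_natCast (t ^ ((1:ℝ)/10)) 10, ← Real.rpow_mul ht0.le]
    norm_num
  have hsqrt : Real.sqrt t = b^(5:ℕ) := by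
    rw [hta, show (b^(10:ℕ)) = (b^(5:ℕ))^2 by ring, Real.sqrt_sq (by positivity)]
  have hIr25 : Ir ^ ((2:ℝ)/5) = a^(4:ℕ) := by
    rw [ha, ← Real.rpow_natCast (Ir ^ ((1:ℝ)/10)) 4, ← Real.rpow_mul hIrpos.le]
    norm_num
  have ht25 : t ^ (-(2/5) : ℝ) = (b^(4:ℕ))⁻¹ := by
    rw [Real.rpow_neg ht0.le]
    congr 1
    rw [hb, ← Real.rpow_natCast (t ^ ((1:ℝ)/10)) 4, ← Real.rpow_mul ht0.le]
    norm_num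
  have hRHS : ENNReal.ofReal (8*π*C₀+2) * ENNReal.ofReal t ^ (-(2/5) : ℝ) * I ^ ((2:ℝ)/5)
      = ENNReal.ofReal ((8*π*C₀+2) * (b^(4:ℕ))⁻¹ * a^(4:ℕ)) := by
    rw [hIeq, ENNReal.ofReal_rpow_of_pos hIrpos, ENNReal.ofReal_rpow_of_pos ht0,
      hIr25, ht25, ← ENNReal.ofReal_mul (by positivity), ← ENNReal.ofReal_mul (by positivity)]
  rw [hRHS]
  clear_value I Ir t a b
  rcases le_or_gt (a^2*b^3) 1 with hreg | hreg
  · -- small data regime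
    have hR : (0:ℝ) < a^6*b^4 := by positivity
    refine (master_bound C₀ hC₀ f hf0 hfC ξ hξ hR).trans ?_
    rw [← htdef, ← hIdef, hIeq]
    have hd0 : (0:ℝ) < (a^6*b^4) * (1 + t*(a^6*b^4)^2) := by
      have := mul_nonneg ht0.le (sq_nonneg (a^6*b^4))
      nlinarith
    rw [← ENNReal.ofReal_mul (div_nonneg (by norm_num) hd0.le),
      ← ENNReal.ofReal_add (by positivity) (mul_nonneg (div_nonneg (by norm_num) hd0.le) hIrpos.le)]
    apply ENNReal.ofReal_le_ofReal
    have e1 : C₀ * (8*π*(a^6*b^4)/Real.sqrt t) = 8*π*C₀*a^6/b := by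
      rw [hsqrt]; field_simp
    have hA1 : 8*π*C₀*a^6/b ≤ 8*π*C₀*a^4/b^4 := by
      rw [div_le_div_iff₀ (by positivity) (by positivity)]
      nlinarith [mul_le_mul_of_nonneg_left hreg
        (by positivity : (0:ℝ) ≤ 8*π*C₀*a^4*b), Real.pi_pos]
    have hB1 : 2 / ((a^6*b^4) * (1 + t*(a^6*b^4)^2)) * Ir ≤ 2*a^4/b^4 := by
      rw [hIa]
      calc 2 / ((a^6*b^4) * (1 + t*(a^6*b^4)^2)) * a^(10:ℕ)
          ≤ 2 / (a^6*b^4) * a^(10:ℕ) := by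
            apply mul_le_mul_of_nonneg_right ?_ (by positivity)
            apply div_le_div_of_nonneg_left (by norm_num) (by positivity)
            nlinarith [mul_nonneg ht0.le (sq_nonneg (a^6*b^4)), hapos, hbpos,
              pow_pos hapos 6, pow_pos hbpos 4, mul_pos (pow_pos hapos 6) (pow_pos hbpos 4)]
        _ = 2*a^4/b^4 := by field_simp
    have efin : 8*π*C₀*a^4/b^4 + 2*a^4/b^4 = (8*π*C₀+2) * (b^(4:ℕ))⁻¹ * a^(4:ℕ) := by
      push_cast
      field_simp
    rw [e1]
    linarith [hA1, hB1]
  · -- large data regime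
    have hR : (0:ℝ) < a^2/b^2 := by positivity
    refine (master_bound C₀ hC₀ f hf0 hfC ξ hξ hR).trans ?_
    rw [← htdef, ← hIdef, hIeq]
    have hkey : (a^2/b^2) * (t*(a^2/b^2)^2) = a^6*b^4 := by
      rw [hta]; field_simp
    have hd0 : (0:ℝ) < (a^2/b^2) * (1 + t*(a^2/b^2)^2) := by
      have h1 := mul_nonneg ht0.le (sq_nonneg (a^2/b^2))
      have h2 : (0:ℝ) < a^2/b^2 := hR
      nlinarith
    rw [← ENNReal.ofReal_mul (div_nonneg (by norm_num) hd0.le),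
      ← ENNReal.ofReal_add (by positivity) (mul_nonneg (div_nonneg (by norm_num) hd0.le) hIrpos.le)]
    apply ENNReal.ofReal_le_ofReal
    have e1 : C₀ * (8*π*(a^2/b^2)/Real.sqrt t) = 8*π*C₀*a^2/b^7 := by
      rw [hsqrt]; field_simp
    have hA1 : 8*π*C₀*a^2/b^7 ≤ 8*π*C₀*a^4/b^4 := by
      rw [div_le_div_iff₀ (by positivity) (by positivity)]
      nlinarith [mul_le_mul_of_nonneg_left hreg.le
        (by positivity : (0:ℝ) ≤ 8*π*C₀*a^2*b^4), Real.pi_pos]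
    have hB1 : 2 / ((a^2/b^2) * (1 + t*(a^2/b^2)^2)) * Ir ≤ 2*a^4/b^4 := by
      rw [hIa]
      calc 2 / ((a^2/b^2) * (1 + t*(a^2/b^2)^2)) * a^(10:ℕ)
          ≤ 2 / (a^6*b^4) * a^(10:ℕ) := by
            apply mul_le_mul_of_nonneg_right ?_ (by positivity)
            apply div_le_div_of_nonneg_left (by norm_num) (by positivity)
            nlinarith [hkey, hR]
        _ = 2*a^4/b^4 := by field_simp
    have efin : 8*π*C₀*a^4/b^4 + 2*a^4/b^4 = (8*π*C₀+2) * (b^(4:ℕ))⁻¹ * a^(4:ℕ) := by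
      push_cast
      field_simp
    rw [e1]
    linarith [hA1, hB1]
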